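/- As r -> infinity with q/p = lambda/r (so p = r/(r+lambda)), the UNB(r,p) pmf converges pointwise to p(x) = lambda^x e^{-lambda}/(x+1)! * 1F1(1; x+2; lambda), the pmf of the Uniform-Poisson distribution UP(lambda). -/

import Mathlib

open scoped BigOperators
open Filter Finset Topology
set_option maxHeartbeats 1000000

/-- Pochhammer (rising factorial) `(a)_n`. -/
noncomputable def poch (a : ℝ) (n : ℕ) : ℝ := ∏ i ∈ Finset.range n, (a + i)

/-- Gauss hypergeometric function `₂F₁(a,b;c;z)`. -/
noncomputable def F21 (a b c z : ℝ) : ℝ :=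
  ∑' n : ℕ, poch a n * poch b n / poch c n * z ^ n / n.factorial

/-- Pmf of the Uniform–Negative Binomial distribution `UNB(r,p)`. -/
noncomputable def unbPMF (r p : ℝ) (x : ℕ) : ℝ :=
  (1 - p) ^ x * p ^ r / (x + 1) *
    (Real.Gamma (r + x) / (Real.Gamma r * (x.factorial : ℝ))) *
    F21 1 (r + x) (2 + x) (1 - p)

/-- Pmf of the negative binomial distribution `NB(r,p)` (generalized binomial coefficient). -/
noncomputable def nbPMF (r p : ℝ) (n : ℕ) : ℝ :=
  Real.Gamma (r + n) / (Real.Gamma r * (n.factorial : ℝ)) * p ^ r * (1 - p) ^ n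

noncomputable def F11 (a c z : ℝ) : ℝ :=
  ∑' k : ℕ, poch a k / poch c k * z ^ k / k.factorial

lemma poch_one (n : ℕ) : poch 1 n = n.factorial := by
  induction n with
  | zero => simp [poch]
  | succ k ih =>
      rw [poch, Finset.prod_range_succ, ← poch, ih]
      push_cast [Nat.factorial_succ]
      ring

lemma poch_pos {a : ℝ} (ha : 0 < a) (n : ℕ) : 0 < poch a n :=
  Finset.prod_pos fun i _ => by positivity

noncomputable def fA (lam : ℝ) (x : ℕ) (r : ℝ) (n : ℕ) : ℝ :=
  ∏ i ∈ Finset.range n, lam * (r + x + i) / ((r + lam) * (2 + x + i))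

noncomputable def gA (lam : ℝ) (x : ℕ) (n : ℕ) : ℝ :=
  ∏ i ∈ Finset.range n, lam / (2 + x + i)

noncomputable def bA (lam : ℝ) (x : ℕ) (n : ℕ) : ℝ :=
  ∏ i ∈ Finset.range n, lam / (2 + x + i) * max 1 ((1 + x + i) / (1 + lam))

lemma ratio_tendsto (a b : ℝ) :
    Tendsto (fun r : ℝ => (r + a) / (r + b)) atTop (𝓝 1) := by
  have h1 : Tendsto (fun r : ℝ => r + b) atTop atTop :=
    tendsto_atTop_add_const_right _ b tendsto_id
  have h2 : Tendsto (fun r : ℝ => 1 + (a - b) / (r + b)) atTop (𝓝 (1 + 0)) :=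
    tendsto_const_nhds.add (Tendsto.div_atTop tendsto_const_nhds h1)
  rw [add_zero] at h2
  refine Tendsto.congr' ?_ h2
  filter_upwards [eventually_gt_atTop (|b|)] with r hr
  have hb : 0 < r + b := by have := neg_abs_le b; linarith
  field_simp
  ring

lemma fac_tendsto (lam a c : ℝ) :
    Tendsto (fun r : ℝ => lam * (r + a) / ((r + lam) * c)) atTop (𝓝 (lam / c)) := by
  have h := (ratio_tendsto a lam).const_mul (lam / c)
  rw [mul_one] at h
  refine h.congr fun r => ?_
  rw [div_mul_div_comm, mul_comm c (r + lam)]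

lemma fA_tendsto (lam : ℝ) (x : ℕ) (n : ℕ) :
    Tendsto (fun r : ℝ => fA lam x r n) atTop (𝓝 (gA lam x n)) := by
  simp only [fA, gA]
  exact tendsto_finset_prod _ fun i _ =>
    (fac_tendsto lam ((x : ℝ) + i) (2 + x + i)).congr fun r => by ring

lemma fA_nonneg {lam r : ℝ} (hlam : 0 < lam) (hr : 1 ≤ r) (x n : ℕ) :
    0 ≤ fA lam x r n := by
  refine Finset.prod_nonneg fun i _ => ?_
  have hx : (0:ℝ) ≤ x := Nat.cast_nonneg x
  have hi : (0:ℝ) ≤ i := Nat.cast_nonneg i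
  apply div_nonneg
  · apply mul_nonneg hlam.le; linarith
  · apply mul_nonneg <;> linarith

lemma fA_le_bA {lam r : ℝ} (hlam : 0 < lam) (hr : 1 ≤ r) (x n : ℕ) :
    fA lam x r n ≤ bA lam x n := by
  refine Finset.prod_le_prod (fun i _ => ?_) (fun i _ => ?_)
  · have hx : (0:ℝ) ≤ x := Nat.cast_nonneg x
    have hi : (0:ℝ) ≤ i := Nat.cast_nonneg i
    apply div_nonneg
    · apply mul_nonneg hlam.le; linarith
    · apply mul_nonneg <;> linarith
  · have hx : (0:ℝ) ≤ x := Nat.cast_nonneg x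
    have hi : (0:ℝ) ≤ i := Nat.cast_nonneg i
    have hrl : (0:ℝ) < r + lam := by linarith
    have hden : (0:ℝ) < 2 + x + i := by linarith
    have hsplit : lam * (r + x + i) / ((r + lam) * (2 + (x:ℝ) + i))
        = lam / (2 + x + i) * ((r + x + i) / (r + lam)) := by
      rw [mul_comm (r + lam) (2 + (x:ℝ) + i), mul_div_mul_comm]
    rw [hsplit]
    refine mul_le_mul_of_nonneg_left ?_ (div_nonneg hlam.le hden.le)
    rcases le_total ((x:ℝ) + i) lam with h | h
    · refine le_trans ?_ (le_max_left _ _)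
      rw [div_le_one hrl]; linarith
    · refine le_trans ?_ (le_max_right _ _)
      rw [div_le_div_iff₀ hrl (by linarith)]
      nlinarith [mul_nonneg (by linarith : (0:ℝ) ≤ r - 1) (by linarith : (0:ℝ) ≤ (x:ℝ) + i - lam)]

lemma bA_nonneg {lam : ℝ} (hlam : 0 < lam) (x n : ℕ) : 0 ≤ bA lam x n := by
  refine Finset.prod_nonneg fun i _ => ?_
  have hx : (0:ℝ) ≤ x := Nat.cast_nonneg x
  have hi : (0:ℝ) ≤ i := Nat.cast_nonneg i
  apply mul_nonneg
  · apply div_nonneg hlam.le; linarith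
  · exact le_trans zero_le_one (le_max_left _ _)

lemma bA_summable {lam : ℝ} (hlam : 0 < lam) (x : ℕ) : Summable (bA lam x) := by
  refine summable_of_ratio_norm_eventually_le (r := lam / (1 + lam))
    (by rw [div_lt_one (by linarith)]; linarith) ?_
  filter_upwards [eventually_ge_atTop ⌈lam⌉₊] with n hn
  have hx : (0:ℝ) ≤ x := Nat.cast_nonneg x
  have h1 : lam ≤ n := le_trans (Nat.le_ceil lam) (Nat.cast_le.mpr hn)
  have hb0 : 0 ≤ bA lam x n := bA_nonneg hlam x n
  have hb1 : 0 ≤ bA lam x (n + 1) := bA_nonneg hlam x (n + 1)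
  have hsucc : bA lam x (n + 1)
      = bA lam x n * (lam / (2 + x + n) * max 1 ((1 + x + n) / (1 + lam))) :=
    Finset.prod_range_succ _ _
  rw [Real.norm_eq_abs, Real.norm_eq_abs, abs_of_nonneg hb0, abs_of_nonneg hb1, hsucc]
  have hmax : max 1 ((1 + (x:ℝ) + n) / (1 + lam)) = (1 + x + n) / (1 + lam) := by
    refine max_eq_right ?_
    rw [le_div_iff₀ (by linarith)]; linarith
  rw [hmax]
  have hfac : lam / (2 + (x:ℝ) + n) * ((1 + x + n) / (1 + lam)) ≤ lam / (1 + lam) := by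
    rw [div_mul_div_comm, div_le_div_iff₀ (by positivity) (by linarith)]
    nlinarith [mul_pos hlam (show (0:ℝ) < 1 + lam by linarith)]
  calc bA lam x n * (lam / (2 + (x:ℝ) + n) * ((1 + x + n) / (1 + lam)))
      ≤ bA lam x n * (lam / (1 + lam)) := mul_le_mul_of_nonneg_left hfac hb0
    _ = lam / (1 + lam) * bA lam x n := mul_comm _ _

lemma term_eq {lam r : ℝ} (hlam : 0 < lam) (hr : 0 < r) (x n : ℕ) :
    poch 1 n * poch (r + x) n / poch (2 + x) n * (lam / (r + lam)) ^ n / n.factorial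
      = fA lam x r n := by
  have hrl : (0:ℝ) < r + lam := by linarith
  have hp2 : poch (2 + (x:ℝ)) n ≠ 0 := (poch_pos (by positivity) n).ne'
  have hfn : (n.factorial : ℝ) ≠ 0 := Nat.cast_ne_zero.mpr n.factorial_ne_zero
  have h1 : fA lam x r n
      = (lam / (r + lam)) ^ n * (poch (r + x) n / poch (2 + x) n) := by
    simp only [fA, poch]
    calc (∏ i ∈ Finset.range n, lam * (r + x + i) / ((r + lam) * (2 + x + i)))
        = ∏ i ∈ Finset.range n, (lam / (r + lam)) * ((r + x + i) / (2 + x + i)) :=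
          Finset.prod_congr rfl fun i _ => (mul_div_mul_comm _ _ _ _)
      _ = (lam / (r + lam)) ^ n
            * ((∏ i ∈ Finset.range n, (r + (x:ℝ) + i)) / ∏ i ∈ Finset.range n, (2 + (x:ℝ) + i)) := by
          rw [Finset.prod_mul_distrib, Finset.prod_const, Finset.card_range,
            Finset.prod_div_distrib]
  rw [poch_one, h1]
  field_simp

lemma F11_eq (lam : ℝ) (x : ℕ) : F11 1 ((x:ℝ) + 2) lam = ∑' n, gA lam x n := by
  unfold F11
  refine tsum_congr fun k => ?_
  have hc : ((x:ℝ) + 2) = 2 + x := by ring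
  have hp2 : poch (2 + (x:ℝ)) k ≠ 0 := (poch_pos (by positivity) k).ne'
  have hfn : (k.factorial : ℝ) ≠ 0 := Nat.cast_ne_zero.mpr k.factorial_ne_zero
  have h1 : gA lam x k = lam ^ k / poch (2 + (x:ℝ)) k := by
    simp only [gA, poch]
    rw [Finset.prod_div_distrib, Finset.prod_const, Finset.card_range]
  rw [hc, poch_one, h1]
  field_simp
lemma gamma_poch {r : ℝ} (hr : 0 < r) (x : ℕ) :
    Real.Gamma (r + x) = Real.Gamma r * poch r x := by
  induction x with
  | zero => simp [poch]
  | succ k ih =>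
      have h : r + ((k : ℕ) + 1 : ℕ) = (r + k) + 1 := by push_cast; ring
      rw [h, Real.Gamma_add_one (by positivity), ih,
        show poch r (k+1) = poch r k * (r + k) from Finset.prod_range_succ _ _]
      ring


theorem stmt12 (lam : ℝ) (hlam : 0 < lam) (x : ℕ) :
    Filter.Tendsto (fun r : ℝ => unbPMF r (r / (r + lam)) x) Filter.atTop
      (nhds (lam ^ x * Real.exp (-lam) / ((x + 1).factorial : ℝ) *
        F11 1 ((x : ℝ) + 2) lam)) := by
  have hxf : ((x.factorial : ℝ)) ≠ 0 := Nat.cast_ne_zero.mpr x.factorial_ne_zero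
  -- Part C : hypergeometric limit
  have hC : Tendsto (fun r : ℝ => F21 1 (r + x) (2 + x) (1 - r / (r + lam))) atTop
      (𝓝 (F11 1 ((x:ℝ) + 2) lam)) := by
    rw [F11_eq]
    have hb : ∀ᶠ r : ℝ in atTop, ∀ n, ‖fA lam x r n‖ ≤ bA lam x n := by
      filter_upwards [eventually_ge_atTop 1] with r hr n
      rw [Real.norm_eq_abs, abs_of_nonneg (fA_nonneg hlam hr x n)]
      exact fA_le_bA hlam hr x n
    have hdom := tendsto_tsum_of_dominated_convergence (bA_summable hlam x)
      (fun n => fA_tendsto lam x n) hb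
    refine Tendsto.congr' ?_ hdom
    filter_upwards [eventually_ge_atTop 1] with r hr
    have hr0 : (0:ℝ) < r := by linarith
    have hrl : (0:ℝ) < r + lam := by linarith
    have hq : 1 - r / (r + lam) = lam / (r + lam) := by field_simp; ring
    rw [hq]
    exact tsum_congr fun n => (term_eq hlam hr0 x n).symm
  -- Part A
  have hA : Tendsto (fun r : ℝ => (1 - r / (r + lam)) ^ x *
      (Real.Gamma (r + x) / (Real.Gamma r * (x.factorial : ℝ)))) atTop
      (𝓝 (lam ^ x / (x.factorial : ℝ))) := by
    have h1 : Tendsto (fun r : ℝ =>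
        (∏ i ∈ Finset.range x, lam * (r + i) / ((r + lam) * 1)) / (x.factorial : ℝ))
        atTop (𝓝 ((∏ _i ∈ Finset.range x, lam / 1) / (x.factorial : ℝ))) :=
      (tendsto_finset_prod (Finset.range x) (fun i _ => fac_tendsto lam (i:ℝ) 1)).div_const _
    simp only [div_one, Finset.prod_const, Finset.card_range] at h1
    refine Tendsto.congr' ?_ h1
    filter_upwards [eventually_ge_atTop 1] with r hr
    have hr0 : (0:ℝ) < r := by linarith
    have hrl : (0:ℝ) < r + lam := by linarith
    have hG : Real.Gamma r ≠ 0 := (Real.Gamma_pos_of_pos hr0).ne'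
    have h2 : (1:ℝ) - r / (r + lam) = lam / (r + lam) := by field_simp; ring
    have h3 : ∏ i ∈ Finset.range x, lam * (r + i) / ((r + lam) * 1)
        = (lam / (r + lam)) ^ x * ∏ i ∈ Finset.range x, (r + (i:ℝ)) := by
      calc ∏ i ∈ Finset.range x, lam * (r + i) / ((r + lam) * 1)
          = ∏ i ∈ Finset.range x, (lam / (r + lam)) * (r + (i:ℝ)) :=
            Finset.prod_congr rfl fun i _ => by rw [mul_one, mul_div_right_comm]
        _ = (lam / (r + lam)) ^ x * ∏ i ∈ Finset.range x, (r + (i:ℝ)) := by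
            rw [Finset.prod_mul_distrib, Finset.prod_const, Finset.card_range]
    rw [h2, gamma_poch hr0, h3, poch]
    field_simp
  -- Part B
  have hB : Tendsto (fun r : ℝ => (r / (r + lam)) ^ r / ((x:ℝ) + 1)) atTop
      (𝓝 (Real.exp (-lam) / ((x:ℝ) + 1))) := by
    have h1 : Tendsto (fun r : ℝ => ((1 + lam / r) ^ r)⁻¹) atTop (𝓝 (Real.exp lam)⁻¹) :=
      (Real.tendsto_one_add_div_rpow_exp lam).inv₀ (Real.exp_ne_zero lam)
    rw [← Real.exp_neg] at h1
    refine Tendsto.div_const (Tendsto.congr' ?_ h1) _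
    filter_upwards [eventually_gt_atTop 0] with r hr
    have h2 : (0:ℝ) ≤ 1 + lam / r := by positivity
    rw [← Real.inv_rpow h2]
    congr 1
    rw [inv_eq_one_div]
    field_simp
  have h := (hA.mul hB).mul hC
  have hval : lam ^ x / (x.factorial : ℝ) * (Real.exp (-lam) / ((x:ℝ) + 1))
      * F11 1 ((x:ℝ) + 2) lam
      = lam ^ x * Real.exp (-lam) / ((x + 1).factorial : ℝ) * F11 1 ((x : ℝ) + 2) lam := by
    have hx1 : ((x:ℝ) + 1) ≠ 0 := by positivity
    rw [Nat.factorial_succ]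
    push_cast
    field_simp
  rw [hval] at h
  refine Tendsto.congr' ?_ h
  filter_upwards [eventually_ge_atTop 1] with r hr
  unfold unbPMF
  ring
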